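/- Let m be an odd positive integer and write u = a + 2b with a ∈ T⋆ = T∖{0,1} and b ∈ T. Then Σ_{a∈T⋆} Σ_{b∈T} S₊(u) = 2^{m+1}(2^m − 2) and Σ_{a∈T⋆} Σ_{b∈T} S₋(u) = 0. -/

import Mathlib

open Finset
open scoped Classical

/-- `i^a` for `a ∈ ℤ/4ℤ`; well defined since `i` has order 4. -/
noncomputable def zi (a : ZMod 4) : ℂ := Complex.I ^ a.val

/-- The exponential sum `S₊(u) = Σ_{x∈T} i^{Tr(ux)} + Σ_{x∈T} i^{3·Tr(ux)}`. -/
noncomputable def Splus {R : Type*} [CommRing R] (T : Finset R) (Tr : R → ZMod 4) (u : R) : ℂ :=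
  (∑ x ∈ T, zi (Tr (u * x))) + ∑ x ∈ T, zi (3 * Tr (u * x))

/-- The exponential sum `S₋(u) = Σ_{x∈T} i^{Tr(ux)} - Σ_{x∈T} i^{3·Tr(ux)}`. -/
noncomputable def Sminus {R : Type*} [CommRing R] (T : Finset R) (Tr : R → ZMod 4) (u : R) : ℂ :=
  (∑ x ∈ T, zi (Tr (u * x))) - ∑ x ∈ T, zi (3 * Tr (u * x))

lemma I_pow_mod (n : ℕ) : Complex.I ^ (n % 4) = Complex.I ^ n := by
  conv_rhs => rw [← Nat.div_add_mod n 4]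
  rw [pow_add, pow_mul, Complex.I_pow_four, one_pow, one_mul]

lemma zi_add (a b : ZMod 4) : zi (a + b) = zi a * zi b := by
  unfold zi
  rw [ZMod.val_add, I_pow_mod, pow_add]

lemma zi_zero : zi 0 = 1 := by simp [zi]

lemma zi_two : zi 2 = -1 := by
  have h : (2 : ZMod 4).val = 2 := rfl
  unfold zi
  rw [h, Complex.I_sq]

theorem stmt_2 (m : ℕ) (hm : Odd m)
    (R : Type*) [CommRing R] [Fintype R] [DecidableEq R]
    -- `R` is the Galois ring GR(4,m): the finite local commutative ring of
    -- characteristic 4 and cardinality 4^m whose maximal ideal is (2)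
    [CharP R 4] [IsLocalRing R]
    (hcard : Fintype.card R = 4 ^ m)
    (hmax : IsLocalRing.maximalIdeal R = Ideal.span {2})
    -- `T` is the Teichmüller set of `R`
    (T : Finset R) (hT : ∀ z : R, z ∈ T ↔ z ^ 2 ^ m = z)
    -- `Tr` is the trace function from `R` to `ℤ/4ℤ`
    (Tr : R → ZMod 4)
    (hTr : ∀ x ∈ T, ∀ y ∈ T,
      (ZMod.castHom (dvd_refl 4) R) (Tr (x + 2 * y)) =
        ∑ j ∈ Finset.range m, (x ^ 2 ^ j + 2 * y ^ 2 ^ j)) :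
    (∑ a ∈ T \ {0, 1}, ∑ b ∈ T, Splus T Tr (a + 2 * b)) = 2 ^ (m + 1) * (2 ^ m - 2) ∧
    (∑ a ∈ T \ {0, 1}, ∑ b ∈ T, Sminus T Tr (a + 2 * b)) = 0 := by
  classical
  have hm1 : 1 ≤ m := by
    rcases hm with ⟨k, hk⟩; omega
  have h2m2 : (2:ℕ) ≤ 2 ^ m := by
    calc (2:ℕ) = 2 ^ 1 := by norm_num
    _ ≤ 2 ^ m := Nat.pow_le_pow_right (by norm_num) hm1
  have h4 : (4 : R) = 0 := by
    have := CharP.cast_eq_zero R 4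
    exact_mod_cast this
  have h2ne : (2 : R) ≠ 0 := by
    intro h
    have h' : ((2:ℕ) : R) = 0 := by exact_mod_cast h
    have := (CharP.cast_eq_zero_iff R 4 2).mp h'
    omega
  haveI : Nontrivial R := ⟨⟨2, 0, h2ne⟩⟩
  have hinj : Function.Injective (ZMod.castHom (dvd_refl 4) R) := ZMod.castHom_injective R
  -- basic T facts
  have hT0 : (0:R) ∈ T := (hT 0).2 (zero_pow (Nat.two_pow_pos m).ne')
  have hT1 : (1:R) ∈ T := (hT 1).2 (one_pow _)
  have hTmul : ∀ x ∈ T, ∀ y ∈ T, x*y ∈ T := by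
    intro x hx y hy
    exact (hT _).2 (by rw [mul_pow, (hT x).1 hx, (hT y).1 hy])
  -- squaring lemmas
  have hsq : ∀ w t : R, (w + 2*t)^2 = w^2 := by
    intro w t
    have : (w + 2*t)^2 = w^2 + 4*(w*t + t^2) := by ring
    rw [this, h4, zero_mul, add_zero]
  have hpow2 : ∀ (w t : R) (j : ℕ), 1 ≤ j → (w + 2*t)^(2^j) = w^(2^j) := by
    intro w t j hj
    obtain ⟨i, rfl⟩ : ∃ i, j = i + 1 := ⟨j-1, by omega⟩
    rw [show 2^(i+1) = 2 * 2^i by ring, pow_mul, pow_mul, hsq w t]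
  have h2pow : ∀ (w t : R) (j : ℕ), 2*(w + 2*t)^(2^j) = 2*w^(2^j) := by
    intro w t j
    rcases Nat.eq_zero_or_pos j with rfl | hj
    · simp only [pow_zero, pow_one]
      have : 2*(w + 2*t) = 2*w + 4*t := by ring
      rw [this, h4, zero_mul, add_zero]
    · rw [hpow2 w t j hj]
  have hadd2 : ∀ (j:ℕ) (u v : R), 2*(u+v)^(2^j) = 2*(u^(2^j)+v^(2^j)) := by
    intro j
    induction j with
    | zero => intro u v; simp only [pow_zero, pow_one]
    | succ i ih =>
      intro u v
      have e1 : (u+v)^(2^(i+1)) = ((u^2 + v^2) + 2*(u*v))^(2^i) := by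
        rw [show 2^(i+1) = 2 * 2^i by ring, pow_mul]
        congr 1
        ring
      rw [e1, h2pow _ _ i, ih (u^2) (v^2), ← pow_mul, ← pow_mul,
        show 2*2^i = 2^(i+1) by ring]
  -- injectivity of reduction on T
  have hTinj : ∀ x ∈ T, ∀ y ∈ T, (∃ t, x = y + 2*t) → x = y := by
    intro x hx y hy ⟨t, hxy⟩
    calc x = x ^ 2^m := ((hT x).1 hx).symm
    _ = y ^ 2^m := by rw [hxy, hpow2 y t m hm1]
    _ = y := (hT y).1 hy
  -- annihilator of 2 is (2)
  have hann : ∀ r : R, 2*r = 0 → ∃ s, r = 2*s := by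
    intro r hr
    have hru : ¬ IsUnit r := by
      intro hu
      obtain ⟨u, rfl⟩ := hu
      have : (2:R) = 2 * u * (u⁻¹ : Rˣ) := by
        rw [mul_assoc]
        norm_cast
        simp
      rw [this, hr, zero_mul] at h2ne
      exact h2ne rfl
    have hmem : r ∈ IsLocalRing.maximalIdeal R := hru
    rw [hmax, Ideal.mem_span_singleton] at hmem
    obtain ⟨s, hs⟩ := hmem
    exact ⟨s, hs⟩
  -- nonzero elements of T are invertible with inverse in T
  have hTu : ∀ x ∈ T, x ≠ 0 → ∃ x' ∈ T, x * x' = 1 := by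
    intro x hx hx0
    have hxu : IsUnit x := by
      by_contra hnu
      have hmem : x ∈ IsLocalRing.maximalIdeal R := hnu
      rw [hmax, Ideal.mem_span_singleton] at hmem
      obtain ⟨s, hs⟩ := hmem
      have hx2 : x^2 = 0 := by
        rw [hs, show (2*s)^2 = 4*s^2 by ring, h4, zero_mul]
      apply hx0
      calc x = x ^ 2^m := ((hT x).1 hx).symm
      _ = x^2 * x^(2^m - 2) := by rw [← pow_add]; congr 1; omega
      _ = 0 := by rw [hx2, zero_mul]
    have h1 : x^(2^m - 1) = 1 := by
      apply hxu.mul_left_cancel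
      rw [mul_one, ← pow_succ']
      have : 2^m - 1 + 1 = 2^m := by omega
      rw [this]
      exact (hT x).1 hx
    refine ⟨x^(2^m - 2), (hT _).2 ?_, ?_⟩
    · rw [← pow_mul, mul_comm, pow_mul, (hT x).1 hx]
    · rw [← pow_succ']
      have : 2^m - 2 + 1 = 2^m - 1 := by omega
      rw [this, h1]
  -- residue field
  set K := IsLocalRing.ResidueField R with hKdef
  set π : R →+* K := IsLocalRing.residue R with hπdef
  have hπ0 : ∀ r : R, π r = 0 ↔ ∃ s, r = 2*s := by
    intro r
    rw [hπdef]
    change (Ideal.Quotient.mk (IsLocalRing.maximalIdeal R)) r = (0 : R ⧸ IsLocalRing.maximalIdeal R) ↔ _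
    rw [Ideal.Quotient.eq_zero_iff_mem, hmax, Ideal.mem_span_singleton]
    exact ⟨fun ⟨c, hc⟩ => ⟨c, hc⟩, fun ⟨c, hc⟩ => ⟨c, hc⟩⟩
  haveI : Finite K := Finite.of_surjective _ (IsLocalRing.residue_surjective (R := R))
  haveI : Fintype K := Fintype.ofFinite K
  have hcardK : Fintype.card K = 2^m := by
    have hS : Nat.card R =
        Nat.card (IsLocalRing.maximalIdeal R) * Nat.card (R ⧸ (IsLocalRing.maximalIdeal R)) :=
      Submodule.card_eq_card_quotient_mul_card _
    let f : R →ₗ[R] R := LinearMap.toSpanSingleton R R (2:R)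
    have hker : LinearMap.ker f = IsLocalRing.maximalIdeal R := by
      ext r
      rw [LinearMap.mem_ker]
      have hf : f r = r * 2 := by
        simp [f, LinearMap.toSpanSingleton, smul_eq_mul]
      rw [hf, hmax, Ideal.mem_span_singleton]
      constructor
      · intro h
        obtain ⟨s, hs⟩ := hann r (by rw [mul_comm]; exact h)
        exact ⟨s, hs⟩
      · rintro ⟨c, rfl⟩
        rw [show 2*c*2 = 4*c by ring, h4, zero_mul]
    have hrange : LinearMap.range f = IsLocalRing.maximalIdeal R := by
      rw [hmax]
      exact (LinearMap.span_singleton_eq_range R R (2:R)).symm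
    have hqr : Nat.card (R ⧸ (IsLocalRing.maximalIdeal R)) =
        Nat.card (IsLocalRing.maximalIdeal R) := by
      calc Nat.card (R ⧸ (IsLocalRing.maximalIdeal R))
          = Nat.card (R ⧸ LinearMap.ker f) := by rw [hker]
      _ = Nat.card (LinearMap.range f) := Nat.card_congr f.quotKerEquivRange.toEquiv
      _ = Nat.card (IsLocalRing.maximalIdeal R) := by rw [hrange]
    have hNR : Nat.card R = 4^m := by rw [Nat.card_eq_fintype_card, hcard]
    have hsq' : Nat.card (R ⧸ (IsLocalRing.maximalIdeal R)) *
        Nat.card (R ⧸ (IsLocalRing.maximalIdeal R)) = 2^m * 2^m := by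
      rw [← hqr] at hS
      rw [← hS, hNR, show (4:ℕ) = 2*2 by norm_num, mul_pow]
    have hcq : Nat.card (R ⧸ (IsLocalRing.maximalIdeal R)) = 2^m :=
      Nat.mul_self_inj.mp hsq'
    have : Fintype.card K = Nat.card (R ⧸ (IsLocalRing.maximalIdeal R)) :=
      (Nat.card_eq_fintype_card (α := K)).symm
    rw [this, hcq]
  have hπinjT : ∀ x ∈ T, ∀ y ∈ T, π x = π y → x = y := by
    intro x hx y hy hxy
    have hz : π (x - y) = 0 := by rw [map_sub, hxy, sub_self]
    obtain ⟨s, hs⟩ := (hπ0 _).mp hz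
    exact hTinj x hx y hy ⟨s, by linear_combination hs⟩
  have hKpow : ∀ α : K, α ^ (2^m) = α := by
    intro α
    rw [← hcardK]
    exact FiniteField.pow_card α
  have hπsurjT : ∀ α : K, ∃ x ∈ T, π x = α := by
    intro α
    obtain ⟨r, hr⟩ := IsLocalRing.residue_surjective (R := R) α
    have h1 : π (r^(2^m)) = π r := by
      rw [map_pow]
      show (π r) ^ 2^m = π r
      exact hKpow _
    have h2 : π (r^(2^m) - r) = 0 := by rw [map_sub, h1, sub_self]
    obtain ⟨s, hs⟩ := (hπ0 _).mp h2
    have hre : r^(2^m) = r + 2*s := by linear_combination hs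
    refine ⟨r^(2^m), (hT _).2 ?_, ?_⟩
    · calc (r^(2^m)) ^ (2^m) = (r + 2*s)^(2^m) := by rw [hre]
      _ = r^(2^m) := hpow2 r s m hm1
    · rw [h1, hr]
  have hcT : T.card = 2^m := by
    rw [← hcardK, ← Finset.card_univ]
    apply Finset.card_bij (fun x _ => π x)
    · intro a ha; exact Finset.mem_univ _
    · intro a ha a' ha' h; exact hπinjT a ha a' ha' h
    · intro β _
      obtain ⟨x, hx, hπx⟩ := hπsurjT β
      exact ⟨x, hx, hπx⟩
  -- trace lemmas
  have hTr0 : Tr 0 = 0 := by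
    apply hinj
    rw [map_zero]
    have h := hTr 0 hT0 0 hT0
    rw [show (0:R) + 2*0 = 0 by ring] at h
    rw [h]
    apply Finset.sum_eq_zero
    intro j _
    rw [zero_pow (Nat.two_pow_pos j).ne']
    ring
  have hcast2 : ∀ y ∈ T,
      (ZMod.castHom (dvd_refl 4) R) (Tr (2*y)) = 2 * ∑ j ∈ range m, y^(2^j) := by
    intro y hy
    have h := hTr 0 hT0 y hy
    rw [show (0:R) + 2*y = 2*y by ring] at h
    rw [h, Finset.mul_sum]
    apply Finset.sum_congr rfl
    intro j _
    rw [zero_pow (Nat.two_pow_pos j).ne', zero_add]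
  have hcastT : ∀ x ∈ T,
      (ZMod.castHom (dvd_refl 4) R) (Tr x) = ∑ j ∈ range m, x^(2^j) := by
    intro x hx
    have h := hTr x hx 0 hT0
    rw [show x + 2*0 = x by ring] at h
    rw [h]
    apply Finset.sum_congr rfl
    intro j _
    rw [zero_pow (Nat.two_pow_pos j).ne']
    ring
  have hsplit : ∀ x ∈ T, ∀ y ∈ T, Tr (x + 2*y) = Tr x + Tr (2*y) := by
    intro x hx y hy
    apply hinj
    rw [map_add, hTr x hx y hy, hcastT x hx, hcast2 y hy, Finset.mul_sum,
      ← Finset.sum_add_distrib]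
  have h2Tr2 : ∀ y ∈ T, 2 * Tr (2*y) = 0 := by
    intro y hy
    apply hinj
    rw [map_mul, map_zero, map_ofNat, hcast2 y hy, ← mul_assoc,
      show (2:R)*2 = 4 by norm_num, h4, zero_mul]
  have h3fix : ∀ t : ZMod 4, 2*t = 0 → 3*t = t := by decide
  -- additivity of y ↦ Tr(2y) along the residue field
  have hDadd : ∀ b ∈ T, ∀ c ∈ T, ∀ s ∈ T, π s = π b + π c →
      Tr (2*s) = Tr (2*b) + Tr (2*c) := by
    intro b hb c hc s hs hsum
    apply hinj
    rw [map_add, hcast2 s hs, hcast2 b hb, hcast2 c hc]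
    have hz : π (s - (b+c)) = 0 := by rw [map_sub, map_add, hsum]; ring
    obtain ⟨t, ht⟩ := (hπ0 _).mp hz
    have hseq : s = (b+c) + 2*t := by linear_combination ht
    rw [Finset.mul_sum, Finset.mul_sum, Finset.mul_sum, ← Finset.sum_add_distrib]
    apply Finset.sum_congr rfl
    intro j _
    rw [hseq, h2pow (b+c) t j, hadd2 j b c, mul_add]
  -- nontriviality: some b₀ ∈ T with Tr(2b₀) = 2
  have hb0 : ∃ b₀ ∈ T, Tr (2*b₀) = 2 := by
    set P : Polynomial K := ∑ j ∈ range m, Polynomial.X ^ (2^j) with hP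
    have hPc : P.coeff 1 = 1 := by
      rw [hP, Polynomial.finset_sum_coeff]
      rw [Finset.sum_eq_single 0]
      · simp
      · intro j hj hj0
        rw [Polynomial.coeff_X_pow]
        have : (2:ℕ)^j ≠ 1 := by
          have : 2 ≤ 2^j := by
            calc (2:ℕ) = 2^1 := by norm_num
            _ ≤ 2^j := Nat.pow_le_pow_right (by norm_num) (by omega)
          omega
        simp [Ne.symm this]
      · intro h
        exact absurd (Finset.mem_range.mpr (by omega)) h
    have hPne : P ≠ 0 := by
      intro h
      rw [h, Polynomial.coeff_zero] at hPc
      exact one_ne_zero hPc.symm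
    have hdeg : P.natDegree < Fintype.card K := by
      rw [hcardK]
      have hle : P.natDegree ≤ 2^(m-1) := by
        rw [hP]
        apply Polynomial.natDegree_sum_le_of_forall_le
        intro j hj
        rw [Polynomial.natDegree_X_pow]
        exact Nat.pow_le_pow_right (by norm_num) (by
          have := Finset.mem_range.mp hj; omega)
      have hlt : (2:ℕ)^(m-1) < 2^m := Nat.pow_lt_pow_right (by norm_num) (by omega)
      omega
    obtain ⟨α, hα⟩ := Polynomial.exists_eval_ne_zero_of_natDegree_lt_card P hPne (by
      rw [Cardinal.mk_fintype]
      exact_mod_cast hdeg)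
    obtain ⟨b₀, hb₀T, hπb₀⟩ := hπsurjT α
    have heval : Polynomial.eval α P = ∑ j ∈ range m, α^(2^j) := by
      rw [hP, Polynomial.eval_finset_sum]
      simp
    have hne : π (∑ j ∈ range m, b₀^(2^j)) ≠ 0 := by
      rw [map_sum]
      simp_rw [map_pow, hπb₀]
      rw [← heval]
      exact hα
    have h2S : (2:R) * ∑ j ∈ range m, b₀^(2^j) ≠ 0 := by
      intro h
      obtain ⟨s, hs⟩ := hann _ h
      exact hne ((hπ0 _).mpr ⟨s, hs⟩)
    have hTrne : Tr (2*b₀) ≠ 0 := by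
      intro h
      apply h2S
      rw [← hcast2 b₀ hb₀T, h, map_zero]
    have hfin : ∀ t : ZMod 4, 2*t = 0 → t ≠ 0 → t = 2 := by decide
    exact ⟨b₀, hb₀T, hfin _ (h2Tr2 b₀ hb₀T) hTrne⟩
  -- the binary character sum vanishes
  have hE : ∑ b ∈ T, zi (Tr (2*b)) = 0 := by
    obtain ⟨b₀, hb₀, hTrb₀⟩ := hb0
    have hsc : ∀ b, b ∈ T → ∃ s, s ∈ T ∧ π s = π b + π b₀ := by
      intro b _
      obtain ⟨s, hs1, hs2⟩ := hπsurjT (π b + π b₀)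
      exact ⟨s, hs1, hs2⟩
    choose! σ hσT hσπ using hsc
    have hπ2b₀ : π (2*b₀) = 0 := (hπ0 _).mpr ⟨b₀, rfl⟩
    have hb₀2 : π b₀ + π b₀ = 0 := by
      have : π (2*b₀) = π b₀ + π b₀ := by rw [show (2:R)*b₀ = b₀ + b₀ by ring, map_add]
      rw [← this, hπ2b₀]
    have hσσ : ∀ b ∈ T, σ (σ b) = b := by
      intro b hb
      apply hπinjT _ (hσT _ (hσT b hb)) _ hb
      rw [hσπ _ (hσT b hb), hσπ b hb, add_assoc, hb₀2, add_zero]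
    have hbij : ∑ b ∈ T, zi (Tr (2 * σ b)) = ∑ b ∈ T, zi (Tr (2*b)) := by
      apply Finset.sum_bij (fun b (hb : b ∈ T) => σ b)
      · intro a ha; exact hσT a ha
      · intro a ha a' ha' h
        apply hπinjT a ha a' ha'
        have := congrArg π h
        rw [hσπ a ha, hσπ a' ha'] at this
        exact add_right_cancel this
      · intro b hb
        exact ⟨σ b, hσT b hb, hσσ b hb⟩
      · intro a ha; rfl
    have hstep : ∀ b ∈ T, zi (Tr (2 * σ b)) = - zi (Tr (2*b)) := by
      intro b hb
      rw [hDadd b hb b₀ hb₀ (σ b) (hσT b hb) (hσπ b hb), hTrb₀, zi_add, zi_two, mul_neg_one]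
    rw [Finset.sum_congr rfl hstep, Finset.sum_neg_distrib] at hbij
    have h2E : (2:ℂ) * ∑ b ∈ T, zi (Tr (2*b)) = 0 := by linear_combination - hbij
    exact (mul_eq_zero.mp h2E).resolve_left two_ne_zero
  -- main inner sum computation
  have main : ∀ a ∈ T, ∀ c : ZMod 4, (c = 1 ∨ c = 3) →
      ∑ b ∈ T, ∑ x ∈ T, zi (c * Tr ((a + 2*b) * x)) = (2:ℂ)^m := by
    intro a ha c hc
    rw [Finset.sum_comm]
    have hterm : ∀ x ∈ T, ∀ b ∈ T,
        c * Tr ((a + 2*b)*x) = c * Tr (a*x) + Tr (2*(b*x)) := by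
      intro x hx b hb
      have hd : (a + 2*b)*x = a*x + 2*(b*x) := by ring
      rw [hd, hsplit (a*x) (hTmul a ha x hx) (b*x) (hTmul b hb x hx), mul_add]
      congr 1
      rcases hc with rfl | rfl
      · simp
      · exact h3fix _ (h2Tr2 _ (hTmul b hb x hx))
    rw [← Finset.add_sum_erase T _ hT0]
    have hx0 : ∑ b ∈ T, zi (c * Tr ((a + 2*b) * 0)) = (2:ℂ)^m := by
      have : ∀ b ∈ T, zi (c * Tr ((a + 2*b) * 0)) = 1 := by
        intro b hb
        rw [mul_zero, hTr0, mul_zero, zi_zero]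
      rw [Finset.sum_congr rfl this, Finset.sum_const, hcT]
      simp
    have hxne : ∀ x ∈ T.erase 0, ∑ b ∈ T, zi (c * Tr ((a + 2*b) * x)) = 0 := by
      intro x hx'
      have hxne0 : x ≠ 0 := (Finset.mem_erase.mp hx').1
      have hx : x ∈ T := (Finset.mem_erase.mp hx').2
      have hfac : ∀ b ∈ T, zi (c * Tr ((a+2*b)*x)) =
          zi (c * Tr (a*x)) * zi (Tr (2*(b*x))) := by
        intro b hb
        rw [hterm x hx b hb, zi_add]
      rw [Finset.sum_congr rfl hfac, ← Finset.mul_sum]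
      have hEx : ∑ b ∈ T, zi (Tr (2*(b*x))) = 0 := by
        rw [← hE]
        obtain ⟨x', hx'T, hxx'⟩ := hTu x hx hxne0
        apply Finset.sum_bij (fun b (hb : b ∈ T) => b * x)
        · intro b hb; exact hTmul b hb x hx
        · intro b hb b' hb' h
          have := congrArg (· * x') h
          simp only [mul_assoc, hxx', mul_one] at this
          exact this
        · intro y hy
          refine ⟨y * x', hTmul y hy x' hx'T, ?_⟩
          rw [mul_assoc, mul_comm x' x, hxx', mul_one]
        · intro b hb; rfl
      rw [hEx, mul_zero]
    rw [hx0, Finset.sum_eq_zero hxne, add_zero]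
  -- assembling
  have hsub : {(0:R), 1} ⊆ T := by
    intro z hz
    rcases Finset.mem_insert.mp hz with rfl | hz'
    · exact hT0
    · rw [Finset.mem_singleton.mp hz']; exact hT1
  have hcard01 : ({(0:R), 1} : Finset R).card = 2 := by
    rw [Finset.card_insert_of_notMem (by simp), Finset.card_singleton]
  have hcard' : (T \ {0, 1}).card = 2^m - 2 := by
    rw [Finset.card_sdiff_of_subset hsub, hcT, hcard01]
  have main1 : ∀ a ∈ T \ {0,1},
      ∑ b ∈ T, ∑ x ∈ T, zi (Tr ((a + 2*b) * x)) = (2:ℂ)^m := by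
    intro a ha
    have haT : a ∈ T := (Finset.mem_sdiff.mp ha).1
    have := main a haT 1 (Or.inl rfl)
    simp_rw [one_mul] at this
    exact this
  have main3 : ∀ a ∈ T \ {0,1},
      ∑ b ∈ T, ∑ x ∈ T, zi (3 * Tr ((a + 2*b) * x)) = (2:ℂ)^m := by
    intro a ha
    have haT : a ∈ T := (Finset.mem_sdiff.mp ha).1
    exact main a haT 3 (Or.inr rfl)
  constructor
  · have hsum : ∀ a ∈ T \ {0,1}, ∑ b ∈ T, Splus T Tr (a + 2*b) = (2:ℂ)^m + (2:ℂ)^m := by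
      intro a ha
      unfold Splus
      rw [Finset.sum_add_distrib]
      rw [show (∑ b ∈ T, ∑ x ∈ T, zi (Tr ((a + 2*b) * x))) = (2:ℂ)^m from main1 a ha,
        show (∑ b ∈ T, ∑ x ∈ T, zi (3 * Tr ((a + 2*b) * x))) = (2:ℂ)^m from main3 a ha]
    rw [Finset.sum_congr rfl hsum, Finset.sum_const, hcard']
    rw [nsmul_eq_mul]
    push_cast [Nat.cast_sub h2m2]
    ring
  · have hsum : ∀ a ∈ T \ {0,1}, ∑ b ∈ T, Sminus T Tr (a + 2*b) = 0 := by
      intro a ha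
      unfold Sminus
      rw [Finset.sum_sub_distrib]
      rw [show (∑ b ∈ T, ∑ x ∈ T, zi (Tr ((a + 2*b) * x))) = (2:ℂ)^m from main1 a ha,
        show (∑ b ∈ T, ∑ x ∈ T, zi (3 * Tr ((a + 2*b) * x))) = (2:ℂ)^m from main3 a ha]
      ring
    rw [Finset.sum_congr rfl hsum, Finset.sum_const, smul_zero]
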